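/- Let C be a positive self-adjoint bounded linear operator on a real Hilbert space H and let λ > 0. Then C + λI is a continuous linear bijection of H and the operator norm satisfies ‖C^{1/2} ∘ (C + λI)^{-1}‖_op ≤ 1/(2√λ), where C^{1/2} denotes the positive square root of C. -/

import Mathlib

open RealInnerProductSpace

/-- for a positive self-adjoint bounded operator `C` on a real Hilbert
space and `λ > 0`, the operator `C + λI` is a continuous linear bijection of `H` and
`‖C^{1/2} ∘ (C + λI)⁻¹‖_op ≤ 1/(2√λ)`, where `C^{1/2}` is the (unique) positive
self-adjoint square root of `C`. -/
theorem statement7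
    {H : Type*} [NormedAddCommGroup H] [InnerProductSpace ℝ H] [CompleteSpace H]
    (C : H →L[ℝ] H) (hC : C.IsPositive)
    -- `S` is the positive self-adjoint square root of `C`
    (S : H →L[ℝ] H) (hS : S.IsPositive) (hSsq : S ∘L S = C)
    (lam : ℝ) (hlam : 0 < lam) :
    ∃ e : H ≃L[ℝ] H,
      (∀ x : H, e x = C x + lam • x) ∧
      ‖S ∘L (e.symm : H →L[ℝ] H)‖ ≤ 1 / (2 * Real.sqrt lam) := by
  set T : H →L[ℝ] H := C + lam • ContinuousLinearMap.id ℝ H with hT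
  have hTapp : ∀ x : H, T x = C x + lam • x := fun x => rfl
  -- the bilinear form
  set B : H →L[ℝ] H →L[ℝ] ℝ := (innerSL ℝ).comp T with hB
  have hBapp : ∀ x y : H, B x y = ⟪T x, y⟫ := fun x y => rfl
  have coercive : IsCoercive B := by
    refine ⟨lam, hlam, fun u => ?_⟩
    have h1 : 0 ≤ ⟪C u, u⟫ := hC.inner_nonneg_left u
    have : B u u = ⟪C u, u⟫ + lam * (‖u‖ * ‖u‖) := by
      rw [hBapp, hTapp, inner_add_left, real_inner_smul_left, real_inner_self_eq_norm_mul_norm]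
    nlinarith
  refine ⟨coercive.continuousLinearEquivOfBilin, ?_, ?_⟩
  · intro x
    have := coercive.unique_continuousLinearEquivOfBilin (v := x) (f := T x)
      (fun w => (hBapp x w).symm)
    rw [← this, hTapp]
  · set e := coercive.continuousLinearEquivOfBilin with he
    apply ContinuousLinearMap.opNorm_le_bound
    · positivity
    intro u
    simp only [ContinuousLinearMap.comp_apply, ContinuousLinearEquiv.coe_coe]
    set v : H := e.symm u with hv
    have hev : T v = u := by
      have : e v = T v := by
        symm
        exact coercive.unique_continuousLinearEquivOfBilin (fun w => (hBapp v w).symm)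
      rw [← this, hv, e.apply_symm_apply]
    clear_value v
    have hu : C v + lam • v = u := by rw [← hTapp, hev]
    clear_value T B e
    clear hv hev hBapp hTapp hB hT he coercive
    -- key quantities
    have hSv : ‖S v‖ ^ 2 = ⟪C v, v⟫ := by
      rw [← hSsq, ContinuousLinearMap.comp_apply, ← real_inner_self_eq_norm_sq]
      exact (hS.1 (S v) v).symm
    have ht0 : 0 ≤ ⟪C v, v⟫ := hC.inner_nonneg_left v
    have htab : ⟪C v, v⟫ ≤ ‖C v‖ * ‖v‖ := real_inner_le_norm _ _
    have hnu : ‖u‖ ^ 2 = ‖C v‖ ^ 2 + 2 * lam * ⟪C v, v⟫ + lam ^ 2 * ‖v‖ ^ 2 := by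
      have h0 : ‖u‖ ^ 2 = ⟪u, u⟫ := (real_inner_self_eq_norm_sq u).symm
      rw [h0, ← hu, real_inner_add_add_self]
      simp only [real_inner_smul_left, real_inner_smul_right, real_inner_self_eq_norm_sq]
      rw [norm_smul, Real.norm_eq_abs, abs_of_pos hlam]
      ring
    have key : 4 * lam * ‖S v‖ ^ 2 ≤ ‖u‖ ^ 2 := by
      rw [hSv, hnu]
      nlinarith [sq_nonneg (‖C v‖ - lam * ‖v‖), norm_nonneg v, norm_nonneg (C v)]
    have hsl : (0:ℝ) < Real.sqrt lam := Real.sqrt_pos.mpr hlam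
    have hls : Real.sqrt lam ^ 2 = lam := Real.sq_sqrt hlam.le
    have key' : (2 * Real.sqrt lam * ‖S v‖) ^ 2 ≤ ‖u‖ ^ 2 := by nlinarith
    have h2 : 2 * Real.sqrt lam * ‖S v‖ ≤ ‖u‖ := by
      have h3 := Real.sqrt_le_sqrt key'
      rwa [Real.sqrt_sq (by positivity), Real.sqrt_sq (norm_nonneg u)] at h3
    rw [one_div, inv_mul_eq_div, le_div_iff₀ (by positivity)]
    linarith
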